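/- Let σ : ℝ → ℝ with σ(x) → 0 as x → -∞ and σ(x) → 1 as x → +∞. Enumerate the vertices of {0,1}^K as n_0, ..., n_{2^K−1}. Then for every ε > 0 there exist biases b_i and weight vectors w_i ∈ ℝ^K (i = 0,...,2^K−1) such that the matrix F with entries F_{ij} = σ(b_i + w_i^T n_j) satisfies |F_{ij} − δ_{ij}| < ε for all i, j. -/
import Mathlib


theorem fnn_near_identity_matrix
    (K : ℕ) (hK : 0 < K)
    (σ : ℝ → ℝ)
    (h0 : Filter.Tendsto σ Filter.atBot (nhds 0))
    (h1 : Filter.Tendsto σ Filter.atTop (nhds 1))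
    (v : (Fin K → Bool) → (Fin K → ℝ))
    (hv : ∀ j k, v j k = if j k then 1 else 0)
    (ε : ℝ) (hε : 0 < ε) :
    ∃ (b : (Fin K → Bool) → ℝ) (w : (Fin K → Bool) → (Fin K → ℝ)),
      ∀ i j : Fin K → Bool,
        |σ (b i + ∑ k, w i k * v j k) - (if i = j then 1 else 0)| < ε := by
  -- get thresholds
  obtain ⟨M1, hM1⟩ := Filter.eventually_atTop.mp
    (h1.eventually (Metric.ball_mem_nhds 1 hε))
  obtain ⟨m0, hm0⟩ := Filter.eventually_atBot.mp
    (h0.eventually (Metric.ball_mem_nhds 0 hε))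
  set θ : ℝ := max M1 (max (-m0) 1) with hθdef
  have hθ1 : (1:ℝ) ≤ θ := le_trans (le_max_right _ _) (le_max_right _ _)
  have hθpos : 0 < θ := lt_of_lt_of_le one_pos hθ1
  have hθM1 : M1 ≤ θ := le_max_left _ _
  have hθm0 : -θ ≤ m0 := by
    have : -m0 ≤ θ := le_trans (le_max_left _ _) (le_max_right _ _)
    linarith
  refine ⟨fun i => θ * (1 - K - ∑ k, (if i k then (1:ℝ) else -1)),
          fun i k => θ * (if i k then 2 else -2), ?_⟩
  intro i j
  have key : (θ * (1 - K - ∑ k, (if i k then (1:ℝ) else -1))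
      + ∑ k, (θ * (if i k then (2:ℝ) else -2)) * v j k)
      = θ * (1 - K + ∑ k, (if i k = j k then (1:ℝ) else -1)) := by
    have hterm : ∀ k, (θ * (if i k then (2:ℝ) else -2)) * v j k
        = θ * ((if i k = j k then (1:ℝ) else -1) + (if i k then (1:ℝ) else -1)) := by
      intro k
      rw [hv]
      cases hik : i k <;> cases hjk : j k <;> simp [hik, hjk] <;> (first | ring1 | norm_num)
    rw [Finset.sum_congr rfl (fun k _ => hterm k)]
    rw [← Finset.mul_sum, Finset.sum_add_distrib]
    ring
  rw [key]
  by_cases h : i = j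
  · subst h
    have hsum : (∑ k, (if i k = i k then (1:ℝ) else -1)) = K := by simp
    rw [if_pos rfl, hsum]
    have harg : θ * (1 - K + K) = θ := by ring
    rw [harg]
    have := hM1 θ hθM1
    rw [Real.dist_eq] at this
    exact this
  · rw [if_neg h]
    -- there is a coordinate where they differ
    have hex : ∃ k, i k ≠ j k := by
      by_contra hc
      push_neg at hc
      exact h (funext hc)
    obtain ⟨k0, hk0⟩ := hex
    have hsum : (∑ k, (if i k = j k then (1:ℝ) else -1)) ≤ K - 2 := by
      have hsplit : (∑ k, (if i k = j k then (1:ℝ) else -1))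
          = (if i k0 = j k0 then (1:ℝ) else -1)
            + ∑ k ∈ Finset.univ.erase k0, (if i k = j k then (1:ℝ) else -1) := by
        exact (Finset.add_sum_erase _ _ (Finset.mem_univ k0)).symm
      rw [hsplit, if_neg hk0]
      have hb : ∑ k ∈ Finset.univ.erase k0, (if i k = j k then (1:ℝ) else -1)
          ≤ (Finset.univ.erase k0).card • (1:ℝ) := by
        apply Finset.sum_le_card_nsmul
        intro k _
        split <;> norm_num
      have hcard : (Finset.univ.erase k0).card = K - 1 := by
        rw [Finset.card_erase_of_mem (Finset.mem_univ k0), Finset.card_univ, Fintype.card_fin]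
      rw [hcard] at hb
      have : ((K - 1 : ℕ) : ℝ) ≤ (K : ℝ) - 1 := by
        rw [Nat.cast_sub hK]; simp
      simp only [nsmul_eq_mul, mul_one] at hb
      linarith
    have harg : θ * (1 - K + ∑ k, (if i k = j k then (1:ℝ) else -1)) ≤ -θ := by
      have h2 : (1 - (K:ℝ) + ∑ k, (if i k = j k then (1:ℝ) else -1)) ≤ -1 := by linarith
      calc θ * (1 - K + ∑ k, (if i k = j k then (1:ℝ) else -1))
          ≤ θ * (-1) := by exact mul_le_mul_of_nonneg_left h2 (le_of_lt hθpos)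
        _ = -θ := by ring
    have := hm0 _ (le_trans harg hθm0)
    rw [Real.dist_eq, sub_zero] at this
    simpa using this
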